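/- For any pointer list P, the iteration of cde stabilizes: there exists n such that cde^{n+1}(P) = cde^n(P), and the stabilized sequence E(P) = cde^n(P) is a pointer list containing no adjacent equal entries. -/
import Mathlib


/-- A finite sequence of integers (0-indexed list) is a *pointer list*:
(1) even positive length; (2) unique index of minimum absolute value;
(3) unique index of maximum absolute value; (4) each intermediate absolute
value occurs at exactly one other index; (5) for each even (0-based) index i,
x i ≤ x (i+1) and x i * x (i+1) > 0; (6) for each even (0-based) index i no
entry has absolute value strictly between |x i| and |x (i+1)|. -/
def IsPointerList (P : List ℤ) : Prop :=
  P.length % 2 = 0 ∧ 0 < P.length ∧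
  (∃! i, i < P.length ∧ ∀ j < P.length, |P.getD i 0| ≤ |P.getD j 0|) ∧
  (∃! i, i < P.length ∧ ∀ j < P.length, |P.getD j 0| ≤ |P.getD i 0|) ∧
  (∀ i < P.length, (∃ j < P.length, |P.getD j 0| < |P.getD i 0|) →
      (∃ j < P.length, |P.getD i 0| < |P.getD j 0|) →
      ∃! j, j < P.length ∧ j ≠ i ∧ |P.getD j 0| = |P.getD i 0|) ∧
  (∀ i, i % 2 = 0 → i + 1 < P.length →
      P.getD i 0 ≤ P.getD (i+1) 0 ∧ 0 < P.getD i 0 * P.getD (i+1) 0) ∧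
  (∀ i, i % 2 = 0 → i + 1 < P.length →
      ¬ ∃ j < P.length,
        (|P.getD i 0| < |P.getD j 0| ∧ |P.getD j 0| < |P.getD (i+1) 0|) ∨
        (|P.getD (i+1) 0| < |P.getD j 0| ∧ |P.getD j 0| < |P.getD i 0|))

-- Context directed excision: delete the first adjacent equal pair, if any.
open Classical in
noncomputable def cde (P : List ℤ) : List ℤ :=
  if h : ∃ i, i + 1 < P.length ∧ P.getD i 0 = P.getD (i+1) 0 then
    P.take (Nat.find h) ++ P.drop (Nat.find h + 2)
  else P

-- Context directed reversal: for the minimal i admitting j > i with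
-- x i = -(x j) (and the minimal such j), reverse and negate the segment
-- from position i+1 through j.
open Classical in
noncomputable def cdr (P : List ℤ) : List ℤ :=
  if h : ∃ i, ∃ j, i < j ∧ j < P.length ∧ P.getD i 0 = -(P.getD j 0) then
    let i := Nat.find h
    let j := Nat.find (Nat.find_spec h)
    P.take (i+1) ++ (((P.drop (i+1)).take (j - i)).reverse.map (fun z => -z)) ++
      P.drop (j+1)
  else P

-- Context directed block swap: for the lexicographically least (i, j)
-- admitting k, ℓ with i < j < k < ℓ, x i = x k, x j = x ℓ, interchange
-- the blocks x_{i+1}..x_{j-1} and x_k..x_ℓ.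
open Classical in
noncomputable def cds (P : List ℤ) : List ℤ :=
  if h : ∃ i, ∃ j, ∃ k, ∃ l, i < j ∧ j < k ∧ k < l ∧ l < P.length ∧
      P.getD i 0 = P.getD k 0 ∧ P.getD j 0 = P.getD l 0 then
    let i := Nat.find h
    let j := Nat.find (Nat.find_spec h)
    let k := Nat.find (Nat.find_spec (Nat.find_spec h))
    let l := Nat.find (Nat.find_spec (Nat.find_spec (Nat.find_spec h)))
    P.take (i+1) ++ ((P.drop k).take (l - k + 1)) ++ ((P.drop j).take (k - j)) ++
      ((P.drop (i+1)).take (j - i - 1)) ++ P.drop (l+1)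
  else P

/-- The doubling map π: each entry z is replaced by (z, z+1) if z > 0
and by (z-1, z) if z < 0. -/
def piMap (M : List ℤ) : List ℤ :=
  M.flatMap (fun z => if 0 < z then [z, z + 1] else [z - 1, z])

/-- One step of the HNS algorithm: apply cde if applicable, else cds if
applicable, else cdr. -/
noncomputable def hnsStep (P : List ℤ) : List ℤ :=
  if cde P ≠ P then cde P else if cds P ≠ P then cds P else cdr P

lemma excise_length (P : List ℤ) (i : ℕ) (hi : i + 1 < P.length) :
    (P.take i ++ P.drop (i+2)).length = P.length - 2 := by
  simp [List.length_append, List.length_take, List.length_drop]; omega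

lemma excise_getD (P : List ℤ) (i : ℕ) (hi : i + 1 < P.length) (j : ℕ) :
    (P.take i ++ P.drop (i+2)).getD j 0 =
      P.getD (if j < i then j else j + 2) 0 := by
  have hlt : (P.take i).length = i := by simp; omega
  rcases lt_or_ge j i with h | h
  · rw [if_pos h, List.getD_append _ _ _ _ (by omega)]
    rw [List.getD_eq_getElem _ _ (by omega), List.getD_eq_getElem _ _ (by omega)]
    simp [List.getElem_take]
  · rw [if_neg (by omega), List.getD_append_right _ _ _ _ (by omega), hlt]
    rcases lt_or_ge (j + 2) P.length with h2 | h2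
    · rw [List.getD_eq_getElem _ _ (by simp; omega), List.getD_eq_getElem _ _ h2]
      rw [List.getElem_drop]
      congr 1
      omega
    · rw [List.getD_eq_default _ _ (by simp; omega), List.getD_eq_default _ _ h2]

lemma sign_chain (a b c : ℤ) (h1 : a ≤ b) (h2 : 0 < a * b) (h3 : b ≤ c)
    (h4 : 0 < b * c) : a ≤ c ∧ 0 < a * c := by
  refine ⟨le_trans h1 h3, ?_⟩
  nlinarith [mul_pos h2 h4, sq_nonneg b]

lemma cde_preserves (P : List ℤ) (hP : IsPointerList P) (i : ℕ)
    (hi : i + 1 < P.length) (heq : P.getD i 0 = P.getD (i+1) 0) :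
    IsPointerList (P.take i ++ P.drop (i+2)) := by
  obtain ⟨hev, hpos, hmin, hmax, hmid, hpair, hgap⟩ := hP
  have habs : |P.getD i 0| = |P.getD (i+1) 0| := by rw [heq]
  obtain ⟨a₀, ⟨ha₀m, ha₀min⟩, ha₀u⟩ := hmin
  obtain ⟨b₀, ⟨hb₀m, hb₀max⟩, hb₀u⟩ := hmax
  have ha₀i : a₀ ≠ i ∧ a₀ ≠ i + 1 := by
    constructor
    · intro h
      have h2 : i + 1 = a₀ :=
        ha₀u (i+1) ⟨hi, fun j hj => by rw [← habs, ← h]; exact ha₀min j hj⟩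
      omega
    · intro h
      have h2 : i = a₀ :=
        ha₀u i ⟨by omega, fun j hj => by rw [habs, ← h]; exact ha₀min j hj⟩
      omega
  have hb₀i : b₀ ≠ i ∧ b₀ ≠ i + 1 := by
    constructor
    · intro h
      have h2 : i + 1 = b₀ :=
        hb₀u (i+1) ⟨hi, fun j hj => by rw [← habs, ← h]; exact hb₀max j hj⟩
      omega
    · intro h
      have h2 : i = b₀ :=
        hb₀u i ⟨by omega, fun j hj => by rw [habs, ← h]; exact hb₀max j hj⟩
      omega
  have ha₀lt : |P.getD a₀ 0| < |P.getD i 0| := by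
    rcases lt_or_eq_of_le (ha₀min i (by omega)) with h | h
    · exact h
    · exfalso
      have : i = a₀ := ha₀u i ⟨by omega, fun j hj => h ▸ ha₀min j hj⟩
      omega
  have hb₀gt : |P.getD i 0| < |P.getD b₀ 0| := by
    rcases lt_or_eq_of_le (hb₀max i (by omega)) with h | h
    · exact h
    · exfalso
      have : i = b₀ := hb₀u i ⟨by omega, fun j hj => h ▸ hb₀max j hj⟩
      omega
  have hval : ∀ a, a < P.length → |P.getD a 0| = |P.getD i 0| → a = i ∨ a = i + 1 := by
    intro a ham haeq
    obtain ⟨d, hd, hdu⟩ := hmid i (by omega) ⟨a₀, ha₀m, ha₀lt⟩ ⟨b₀, hb₀m, hb₀gt⟩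
    by_cases hai : a = i
    · exact Or.inl hai
    · have h1 : a = d := hdu a ⟨ham, hai, haeq⟩
      have h2 : i + 1 = d := hdu (i+1) ⟨hi, by omega, habs.symm⟩
      omega
  have hfj : ∀ j : ℕ, (if j < i then j else j + 2) ≠ i ∧
      (if j < i then j else j + 2) ≠ i + 1 := by
    intro j; split <;> omega
  have hfm : ∀ j, j < P.length - 2 → (if j < i then j else j + 2) < P.length := by
    intro j hj; split <;> omega
  have hnotv : ∀ j, j < P.length - 2 →
      |P.getD (if j < i then j else j + 2) 0| ≠ |P.getD i 0| := by
    intro j hj hcon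
    rcases hval _ (hfm j hj) hcon with h | h
    · exact (hfj j).1 h
    · exact (hfj j).2 h
  have hsurj : ∀ a, a < P.length → a ≠ i → a ≠ i + 1 →
      ∃ j, j < P.length - 2 ∧ (if j < i then j else j + 2) = a := by
    intro a ham h1 h2
    rcases lt_or_ge a i with h | h
    · exact ⟨a, by omega, by rw [if_pos h]⟩
    · exact ⟨a - 2, by omega, by rw [if_neg (by omega)]; omega⟩
  have hinj : ∀ j k : ℕ,
      (if j < i then j else j + 2) = (if k < i then k else k + 2) → j = k := by
    intro j k; split <;> split <;> omega
  unfold IsPointerList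
  rw [excise_length P i hi]
  simp only [excise_getD P i hi]
  refine ⟨by omega, by omega, ?_, ?_, ?_, ?_, ?_⟩
  · -- min
    obtain ⟨a₁, ha₁, hfa₁⟩ := hsurj a₀ ha₀m ha₀i.1 ha₀i.2
    refine ⟨a₁, ⟨ha₁, ?_⟩, ?_⟩
    · intro j hj; rw [hfa₁]; exact ha₀min _ (hfm j hj)
    · rintro b ⟨hbm, hbmin⟩
      have hb : (if b < i then b else b + 2) = a₀ := by
        apply ha₀u
        refine ⟨hfm b hbm, ?_⟩
        intro j hj
        by_cases hji : j = i ∨ j = i + 1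
        · have h1 : |P.getD (if b < i then b else b + 2) 0| ≤ |P.getD a₀ 0| := by
            have := hbmin a₁ ha₁; rwa [hfa₁] at this
          have h2 : |P.getD a₀ 0| < |P.getD j 0| := by
            rcases hji with rfl | rfl
            · exact ha₀lt
            · rw [← habs]; exact ha₀lt
          linarith
        · push_neg at hji
          obtain ⟨j', hj', hfj'⟩ := hsurj j hj hji.1 hji.2
          have := hbmin j' hj'; rwa [hfj'] at this
      exact hinj b a₁ (by rw [hb, hfa₁])
  · -- max
    obtain ⟨b₁, hb₁, hfb₁⟩ := hsurj b₀ hb₀m hb₀i.1 hb₀i.2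
    refine ⟨b₁, ⟨hb₁, ?_⟩, ?_⟩
    · intro j hj; rw [hfb₁]; exact hb₀max _ (hfm j hj)
    · rintro b ⟨hbm, hbmax⟩
      have hb : (if b < i then b else b + 2) = b₀ := by
        apply hb₀u
        refine ⟨hfm b hbm, ?_⟩
        intro j hj
        by_cases hji : j = i ∨ j = i + 1
        · have h1 : |P.getD b₀ 0| ≤ |P.getD (if b < i then b else b + 2) 0| := by
            have := hbmax b₁ hb₁; rwa [hfb₁] at this
          have h2 : |P.getD j 0| < |P.getD b₀ 0| := by
            rcases hji with rfl | rfl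
            · exact hb₀gt
            · rw [← habs]; exact hb₀gt
          linarith
        · push_neg at hji
          obtain ⟨j', hj', hfj'⟩ := hsurj j hj hji.1 hji.2
          have := hbmax j' hj'; rwa [hfj'] at this
      exact hinj b b₁ (by rw [hb, hfb₁])
  · -- mid
    rintro c hc ⟨s, hs, hslt⟩ ⟨t, ht, htgt⟩
    obtain ⟨d, ⟨hdm, hdne, hdeq⟩, hdu⟩ :=
      hmid (if c < i then c else c + 2) (hfm c hc) ⟨_, hfm s hs, hslt⟩ ⟨_, hfm t ht, htgt⟩
    have hdnoti : d ≠ i ∧ d ≠ i + 1 := by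
      constructor <;> rintro rfl
      · exact hnotv c hc hdeq.symm
      · apply hnotv c hc
        rw [← hdeq]; exact habs.symm
    obtain ⟨d', hd', hfd'⟩ := hsurj d hdm hdnoti.1 hdnoti.2
    refine ⟨d', ⟨hd', ?_, ?_⟩, ?_⟩
    · intro hcon; exact hdne (by rw [← hfd', hcon])
    · rw [hfd']; exact hdeq
    · rintro e ⟨hem, hene, heeq⟩
      have he : (if e < i then e else e + 2) = d :=
        hdu _ ⟨hfm e hem, fun hcon => hene (hinj e c hcon), heeq⟩
      exact hinj e d' (by rw [he, hfd'])
  · -- pairs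
    intro e he hel
    by_cases h1 : e + 1 < i
    · rw [if_pos (by omega), if_pos h1]
      exact hpair e he (by omega)
    by_cases h2 : i ≤ e
    · rw [if_neg (by omega), if_neg (by omega)]
      exact hpair (e+2) (by omega) (by omega)
    · have hie : i = e + 1 := by omega
      rw [if_pos (by omega), if_neg (by omega)]
      obtain ⟨hle1, hpos1⟩ := hpair e he (by omega)
      obtain ⟨hle2, hpos2⟩ := hpair (e+2) (by omega) (by omega)
      have heq' : P.getD (e+1) 0 = P.getD (e+2) 0 := by
        rw [hie] at heq
        rw [show e + 1 + 1 = e + 2 by omega] at heq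
        exact heq
      rw [show e + 2 + 1 = e + 1 + 2 by omega] at hle2 hpos2
      rw [← heq'] at hle2 hpos2
      exact sign_chain _ _ _ hle1 hpos1 hle2 hpos2
  · -- gaps
    intro e he hel
    by_cases h1 : e + 1 < i
    · rw [if_pos (by omega), if_pos h1]
      rintro ⟨j, hj, hc⟩
      exact hgap e he (by omega) ⟨_, hfm j hj, hc⟩
    by_cases h2 : i ≤ e
    · rw [if_neg (by omega), if_neg (by omega)]
      rintro ⟨j, hj, hc⟩
      rw [show e + 2 + 1 = e + 1 + 2 by omega] at hc
      exact hgap (e+2) (by omega) (by omega) ⟨_, hfm j hj, hc⟩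
    · have hie : i = e + 1 := by omega
      rw [if_pos (by omega), if_neg (by omega)]
      have heq' : P.getD (e+1) 0 = P.getD (e+2) 0 := by
        rw [hie] at heq
        rw [show e + 1 + 1 = e + 2 by omega] at heq
        exact heq
      have hvm : |P.getD (e+1) 0| = |P.getD (e+2) 0| := by rw [heq']
      rw [show e + 1 + 2 = e + 2 + 1 by omega]
      rintro ⟨j, hj, hc⟩
      have hw : |P.getD (if j < i then j else j + 2) 0| ≠ |P.getD (e+1) 0| := by
        rw [show e + 1 = i from hie.symm]
        exact hnotv j hj
      have hg1 := hgap e he (by omega)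
      have hg2 := hgap (e+2) (by omega) (by omega)
      rcases hc with ⟨hc1, hc2⟩ | ⟨hc1, hc2⟩
      · rcases lt_trichotomy (|P.getD (if j < i then j else j + 2) 0|)
          (|P.getD (e+1) 0|) with hlt | heq0 | hgt
        · exact hg1 ⟨_, hfm j hj, Or.inl ⟨hc1, hlt⟩⟩
        · exact hw heq0
        · exact hg2 ⟨_, hfm j hj, Or.inl ⟨by rw [← hvm]; exact hgt, hc2⟩⟩
      · rcases lt_trichotomy (|P.getD (if j < i then j else j + 2) 0|)
          (|P.getD (e+1) 0|) with hlt | heq0 | hgt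
        · exact hg2 ⟨_, hfm j hj, Or.inr ⟨hc1, by rw [← hvm]; exact hlt⟩⟩
        · exact hw heq0
        · exact hg1 ⟨_, hfm j hj, Or.inr ⟨hgt, hc2⟩⟩


lemma cde_stab : ∀ (N : ℕ) (P : List ℤ), P.length ≤ N → IsPointerList P →
    ∃ n, cde^[n+1] P = cde^[n] P ∧ IsPointerList (cde^[n] P) ∧
      ∀ i, i + 1 < (cde^[n] P).length →
        (cde^[n] P).getD i 0 ≠ (cde^[n] P).getD (i+1) 0 := by
  intro N
  induction N with
  | zero =>
    intro P hl hP
    exact absurd hP.2.1 (by omega)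
  | succ N ih =>
    intro P hl hP
    by_cases h : ∃ i, i + 1 < P.length ∧ P.getD i 0 = P.getD (i+1) 0
    · have hcde : cde P = P.take (Nat.find h) ++ P.drop (Nat.find h + 2) := by
        simp only [cde]
        rw [dif_pos h]
      obtain ⟨hfi, hfeq⟩ := Nat.find_spec h
      have hQ : IsPointerList (cde P) := by
        rw [hcde]; exact cde_preserves P hP _ hfi hfeq
      have hQl : (cde P).length ≤ N := by
        rw [hcde, excise_length P _ hfi]; omega
      obtain ⟨n, h1, h2, h3⟩ := ih (cde P) hQl hQ
      have e : ∀ k : ℕ, cde^[k+1] P = cde^[k] (cde P) := fun k =>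
        Function.iterate_succ_apply cde k P
      refine ⟨n + 1, ?_, ?_, ?_⟩
      · rw [e (n+1), e n]; exact h1
      · rw [e n]; exact h2
      · rw [e n]; exact h3
    · refine ⟨0, ?_, ?_, ?_⟩
      · show cde^[0] (cde P) = cde^[0] P
        simp only [Function.iterate_zero, id_eq]
        simp only [cde]
        rw [dif_neg h]
      · simpa using hP
      · simp only [Function.iterate_zero, id_eq]
        push_neg at h
        exact h

/-- the iteration of cde on a pointer list stabilizes, and the
stabilized value is a pointer list with no adjacent equal entries. -/
theorem stmt17 (P : List ℤ) (hP : IsPointerList P) :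
    ∃ n, cde^[n+1] P = cde^[n] P ∧ IsPointerList (cde^[n] P) ∧
      ∀ i, i + 1 < (cde^[n] P).length →
        (cde^[n] P).getD i 0 ≠ (cde^[n] P).getD (i+1) 0 := by
  exact cde_stab P.length P le_rfl hP
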